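/- The optimal log-utility portfolio is attained by pointwise maximization of the integrand: let T > 0, a² := σ² + ρ² > 0, let f : ℝ → ℝ, and let h, r : [0,T] → ℝ be measurable functions with f ∘ h and r bounded. For any bounded measurable portfolio π : [0,T] → ℝ, define J(π) = ∫₀ᵀ [ (c+g)·π(t) + π(t)·f(h(t)) + (1 - π(t))·r(t) + (a²/2)·(π(t) - π(t)²) ] dt. Then the portfolio π*(t) = 1/2 + (c + g + f(h(t)) - r(t))/a² satisfies J(π) ≤ J(π*) for every bounded measurable π. -/
import Mathlib


open MeasureTheory Filter Topology

lemma aux_int (cg A T : ℝ) (fh r π : ℝ → ℝ) (hT : 0 ≤ T)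
    (hfh : Measurable fh) (hr : Measurable r) (hπ : Measurable π)
    (Mf Mr K : ℝ)
    (hMf : ∀ t ∈ Set.Icc (0:ℝ) T, |fh t| ≤ Mf)
    (hMr : ∀ t ∈ Set.Icc (0:ℝ) T, |r t| ≤ Mr)
    (hK : ∀ t ∈ Set.Icc (0:ℝ) T, |π t| ≤ K) :
    IntervalIntegrable
      (fun t => cg * π t + π t * fh t + (1 - π t) * r t + A / 2 * (π t - (π t) ^ 2))
      volume 0 T := by
  rw [intervalIntegrable_iff]
  haveI : IsFiniteMeasure (volume.restrict (Set.uIoc (0:ℝ) T)) := by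
    constructor
    rw [Measure.restrict_apply_univ, Set.uIoc, Real.volume_Ioc]
    exact ENNReal.ofReal_lt_top
  have hsub : Set.uIoc (0:ℝ) T ⊆ Set.Icc 0 T := by
    rw [Set.uIoc_of_le hT]
    exact Set.Ioc_subset_Icc_self
  refine (integrable_const (|cg| * K + K * Mf + (1 + K) * Mr + |A| / 2 * (K + K ^ 2))).mono'
    ?_ ?_
  · exact ((((measurable_const.mul hπ).add (hπ.mul hfh)).add
      ((measurable_const.sub hπ).mul hr)).add
      (measurable_const.mul (hπ.sub (hπ.pow_const 2)))).aestronglyMeasurable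
  · refine (ae_restrict_mem measurableSet_uIoc).mono fun t ht => ?_
    have htI := hsub ht
    have h1 := hK t htI
    have h2 := hMf t htI
    have h3 := hMr t htI
    have h0 : (0:ℝ) ≤ |π t| := abs_nonneg _
    have hK0 : (0:ℝ) ≤ K := le_trans h0 h1
    have e1 : |cg * π t + π t * fh t + (1 - π t) * r t + A / 2 * (π t - (π t) ^ 2)|
        ≤ |cg * π t| + |π t * fh t| + |(1 - π t) * r t| + |A / 2 * (π t - (π t) ^ 2)| := by
      calc _ ≤ |cg * π t + π t * fh t + (1 - π t) * r t| + |A / 2 * (π t - (π t) ^ 2)| :=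
            abs_add_le _ _
        _ ≤ |cg * π t + π t * fh t| + |(1 - π t) * r t| + |A / 2 * (π t - (π t) ^ 2)| := by
            gcongr; exact abs_add_le _ _
        _ ≤ _ := by gcongr; exact abs_add_le _ _
    have b1 : |cg * π t| ≤ |cg| * K := by
      rw [abs_mul]; exact mul_le_mul_of_nonneg_left h1 (abs_nonneg _)
    have b2 : |π t * fh t| ≤ K * Mf := by
      rw [abs_mul]; exact mul_le_mul h1 h2 (abs_nonneg _) hK0
    have b3 : |(1 - π t) * r t| ≤ (1 + K) * Mr := by
      rw [abs_mul]
      have : |1 - π t| ≤ 1 + K := by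
        calc |1 - π t| ≤ |(1:ℝ)| + |π t| := abs_sub _ _
          _ ≤ 1 + K := by rw [abs_one]; linarith
      exact mul_le_mul this h3 (abs_nonneg _) (by linarith)
    have b4 : |A / 2 * (π t - (π t) ^ 2)| ≤ |A| / 2 * (K + K ^ 2) := by
      rw [abs_mul]
      have hp : |π t - (π t) ^ 2| ≤ K + K ^ 2 := by
        calc |π t - (π t) ^ 2| ≤ |π t| + |(π t) ^ 2| := abs_sub _ _
          _ = |π t| + |π t| ^ 2 := by rw [abs_pow]
          _ ≤ K + K ^ 2 := by gcongr
      have hA2 : |A / 2| = |A| / 2 := by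
        rw [abs_div]; norm_num
      rw [hA2]
      exact mul_le_mul_of_nonneg_left hp (by positivity)
    simp only [Real.norm_eq_abs]
    linarith

theorem stmt_16
    (c g σ ρ T : ℝ) (hσ : 0 < σ) (hρ : 0 < ρ) (hT : 0 < T)
    (f : ℝ → ℝ) (h r : ℝ → ℝ)
    (hmeas : Measurable h) (hrmeas : Measurable r)
    (hfhmeas : Measurable fun t => f (h t))
    (hfhbdd : ∃ M : ℝ, ∀ t ∈ Set.Icc (0 : ℝ) T, |f (h t)| ≤ M)
    (hrbdd : ∃ M : ℝ, ∀ t ∈ Set.Icc (0 : ℝ) T, |r t| ≤ M) :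
    ∀ π : ℝ → ℝ, Measurable π → (∃ K : ℝ, ∀ t ∈ Set.Icc (0 : ℝ) T, |π t| ≤ K) →
      (∫ t in (0 : ℝ)..T,
        ((c + g) * π t + π t * f (h t) + (1 - π t) * r t
          + (σ ^ 2 + ρ ^ 2) / 2 * (π t - (π t) ^ 2)))
      ≤ ∫ t in (0 : ℝ)..T,
          ((c + g) * (1 / 2 + (c + g + f (h t) - r t) / (σ ^ 2 + ρ ^ 2))
            + (1 / 2 + (c + g + f (h t) - r t) / (σ ^ 2 + ρ ^ 2)) * f (h t)
            + (1 - (1 / 2 + (c + g + f (h t) - r t) / (σ ^ 2 + ρ ^ 2))) * r t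
            + (σ ^ 2 + ρ ^ 2) / 2
              * ((1 / 2 + (c + g + f (h t) - r t) / (σ ^ 2 + ρ ^ 2))
                - (1 / 2 + (c + g + f (h t) - r t) / (σ ^ 2 + ρ ^ 2)) ^ 2)) := by
  obtain ⟨Mf, hMf⟩ := hfhbdd
  obtain ⟨Mr, hMr⟩ := hrbdd
  set A := σ ^ 2 + ρ ^ 2 with hAdef
  have hA : 0 < A := by positivity
  intro π hπm ⟨K, hK⟩
  -- the optimal portfolio
  set πs : ℝ → ℝ := fun t => 1 / 2 + (c + g + f (h t) - r t) / A with hπs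
  have hπsm : Measurable πs :=
    measurable_const.add ((((measurable_const.add hfhmeas).sub hrmeas)).div_const A)
  have hMf0 : 0 ≤ Mf := le_trans (abs_nonneg _) (hMf 0 (by constructor <;> linarith))
  have hMr0 : 0 ≤ Mr := le_trans (abs_nonneg _) (hMr 0 (by constructor <;> linarith))
  have hπsK : ∀ t ∈ Set.Icc (0:ℝ) T, |πs t| ≤ 1 / 2 + (|c + g| + Mf + Mr) / A := by
    intro t ht
    have h2 := hMf t ht
    have h3 := hMr t ht
    have hd : |(c + g + f (h t) - r t) / A| = |c + g + f (h t) - r t| / A := by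
      rw [abs_div, abs_of_pos hA]
    calc |πs t| ≤ |(1:ℝ)/2| + |(c + g + f (h t) - r t) / A| := abs_add_le _ _
      _ = 1/2 + |c + g + f (h t) - r t| / A := by rw [hd]; norm_num
      _ ≤ 1/2 + (|c + g| + Mf + Mr) / A := by
          gcongr
          calc |c + g + f (h t) - r t| ≤ |c + g + f (h t)| + |r t| := abs_sub _ _
            _ ≤ |c + g| + |f (h t)| + |r t| := by gcongr; exact abs_add_le _ _
            _ ≤ |c + g| + Mf + Mr := by gcongr
  have hi1 := aux_int (c + g) A T (fun t => f (h t)) r π hT.le hfhmeas hrmeas hπm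
    Mf Mr K hMf hMr hK
  have hi2 := aux_int (c + g) A T (fun t => f (h t)) r πs hT.le hfhmeas hrmeas hπsm
    Mf Mr _ hMf hMr hπsK
  refine intervalIntegral.integral_mono_on hT.le hi1 hi2 fun t ht => ?_
  have e : (1 / 2 + (c + g + f (h t) - r t) / A) = πs t := rfl
  rw [e]
  have key : ((c + g) * πs t + πs t * f (h t) + (1 - πs t) * r t + A / 2 * (πs t - πs t ^ 2))
      - ((c + g) * π t + π t * f (h t) + (1 - π t) * r t + A / 2 * (π t - π t ^ 2))
      = A / 2 * (πs t - π t) ^ 2 := by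
    simp only [hπs]
    field_simp
    ring
  linarith [key, mul_nonneg (by positivity : (0:ℝ) ≤ A / 2) (sq_nonneg (πs t - π t))]
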